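/- Let F be a function on the space of 2×2 complex symmetric matrices satisfying the weight-k transformation law F(γ·M) = det(CM+D)^k F(M) for all γ = [[A,B],[C,D]] ∈ Sp(4,ℤ) (trivial multiplier). If k is not divisible by 5, then F(σ₁) = 0 at the fixed point σ₁ = [[ζ, ζ+ζ⁻²],[ζ+ζ⁻², -ζ⁻¹]] with ζ = e^{2πi/5}. -/

import Mathlib

open Matrix

/-- The standard symplectic form `J = [[0, I], [-I, 0]]` over ℤ. -/
def symplJ (g : ℕ) : Matrix (Fin g ⊕ Fin g) (Fin g ⊕ Fin g) ℤ :=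
  Matrix.fromBlocks 0 1 (-1) 0

noncomputable def zeta5 : ℂ := Complex.exp (2 * Real.pi * Complex.I / 5)

/-- The fixed point `σ₁` with `ζ = e^{2πi/5}`. -/
noncomputable def sigma1 : Matrix (Fin 2) (Fin 2) ℂ :=
  !![zeta5, zeta5 + zeta5 ^ (-2 : ℤ); zeta5 + zeta5 ^ (-2 : ℤ), -zeta5⁻¹]

/-- A weight-`k` Siegel modular form (trivial multiplier) vanishes at `σ₁` unless `5 ∣ k`. -/
theorem stmt6 (k : ℤ) (F : Matrix (Fin 2) (Fin 2) ℂ → ℂ)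
    (hF : ∀ A B C D : Matrix (Fin 2) (Fin 2) ℤ,
      Matrix.fromBlocks A B C D * symplJ 2 * (Matrix.fromBlocks A B C D)ᵀ = symplJ 2 →
      ∀ M : Matrix (Fin 2) (Fin 2) ℂ, Mᵀ = M →
      IsUnit (C.map (Int.cast : ℤ → ℂ) * M + D.map (Int.cast : ℤ → ℂ)) →
      F ((A.map (Int.cast : ℤ → ℂ) * M + B.map (Int.cast : ℤ → ℂ)) *
          (C.map (Int.cast : ℤ → ℂ) * M + D.map (Int.cast : ℤ → ℂ))⁻¹) =
        ((C.map (Int.cast : ℤ → ℂ) * M + D.map (Int.cast : ℤ → ℂ)).det) ^ k * F M)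
    (hk : ¬ ((5:ℤ) ∣ k)) :
    F sigma1 = 0 := by
  have hprim : IsPrimitiveRoot zeta5 5 := by
    have := Complex.isPrimitiveRoot_exp 5 (by norm_num)
    convert this using 2
    simp [zeta5]
  have h5 : zeta5 ^ 5 = 1 := hprim.pow_eq_one
  have h1 : zeta5 ≠ 1 := hprim.ne_one (by norm_num)
  have h0 : zeta5 ≠ 0 := fun h => by simp [h] at h5
  have hinv : zeta5⁻¹ = zeta5 ^ 4 := inv_eq_of_mul_eq_one_left (by linear_combination h5)
  have hm2 : zeta5 ^ (-2 : ℤ) = zeta5 ^ 3 := by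
    have h : zeta5 ^ (-2 : ℤ) = (zeta5 ^ 2)⁻¹ := by rw [_root_.zpow_neg]; norm_cast
    rw [h]; exact inv_eq_of_mul_eq_one_left (by linear_combination h5)
  have hsum : zeta5 ^ 4 + zeta5 ^ 3 + zeta5 ^ 2 + zeta5 + 1 = 0 := by
    have h : (zeta5 - 1) * (zeta5 ^ 4 + zeta5 ^ 3 + zeta5 ^ 2 + zeta5 + 1) = 0 := by
      linear_combination h5
    rcases mul_eq_zero.1 h with h | h
    · exact absurd (sub_eq_zero.1 h) h1
    · exact h
  set Am : Matrix (Fin 2) (Fin 2) ℤ := !![0,-1;0,0] with hAm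
  set Bm : Matrix (Fin 2) (Fin 2) ℤ := !![-1,-1;-1,0] with hBm
  set Cm : Matrix (Fin 2) (Fin 2) ℤ := !![0,0;1,0] with hCm
  set Dm : Matrix (Fin 2) (Fin 2) ℤ := !![0,-1;0,1] with hDm
  have hsympl : Matrix.fromBlocks Am Bm Cm Dm * symplJ 2 *
      (Matrix.fromBlocks Am Bm Cm Dm)ᵀ = symplJ 2 := by
    rw [hAm, hBm, hCm, hDm]; decide
  have hsymm : sigma1ᵀ = sigma1 := by
    ext i j; fin_cases i <;> fin_cases j <;> simp [sigma1]
  have hdet : (Cm.map (Int.cast : ℤ → ℂ) * sigma1 + Dm.map (Int.cast : ℤ → ℂ)).det = zeta5 := by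
    simp [hCm, hDm, Matrix.det_fin_two, Matrix.mul_apply, Fin.sum_univ_succ, sigma1,
      Matrix.map_apply]
  have hunit : IsUnit (Cm.map (Int.cast : ℤ → ℂ) * sigma1 + Dm.map (Int.cast : ℤ → ℂ)) := by
    rw [Matrix.isUnit_iff_isUnit_det, hdet]
    exact isUnit_iff_ne_zero.2 h0
  have hfix : (Am.map (Int.cast : ℤ → ℂ) * sigma1 + Bm.map (Int.cast : ℤ → ℂ)) *
      (Cm.map (Int.cast : ℤ → ℂ) * sigma1 + Dm.map (Int.cast : ℤ → ℂ))⁻¹ = sigma1 := by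
    have : Invertible (Cm.map (Int.cast : ℤ → ℂ) * sigma1 + Dm.map (Int.cast : ℤ → ℂ)) :=
      Matrix.invertibleOfIsUnitDet _ (by rw [hdet]; exact isUnit_iff_ne_zero.2 h0)
    rw [Matrix.mul_inv_eq_iff_eq_mul_of_invertible]
    ext i j
    fin_cases i <;> fin_cases j <;>
      simp [hAm, hBm, hCm, hDm, sigma1, Matrix.mul_apply, Fin.sum_univ_succ, Matrix.map_apply,
        hinv, hm2] <;>
      first
        | linear_combination -hsum
        | linear_combination -hsum - zeta5 * h5
        | linear_combination -h5
        | linear_combination hsum + (1 + zeta5 ^ 2) * h5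
  have key := hF Am Bm Cm Dm hsympl sigma1 hsymm hunit
  rw [hfix, hdet] at key
  have hz : (zeta5 ^ k - 1) * F sigma1 = 0 := by linear_combination -key
  rcases mul_eq_zero.1 hz with h | h
  · exact absurd ((hprim.zpow_eq_one_iff_dvd k).1 (by linear_combination h)) hk
  · exact h
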